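/- Let H be a Hilbert space, D ⊆ B(H) a C*-subalgebra acting non-degenerately, and V : X → H a closable densely defined operator with domain X such that r V ξ = V r ξ for all r ∈ D and ξ ∈ X, with r X ⊆ X. Then the closure \bar{V} of V satisfies r \bar{V} ⊆ \bar{V} r for all r in the von Neumann algebra D'' generated by D; that is, \bar{V} is affiliated with the commutant D'. -/

import Mathlib

section Aux

theorem projComm' {𝕜 E : Type*} [RCLike 𝕜] [NormedAddCommGroup E] [InnerProductSpace 𝕜 E]
    [CompleteSpace E] (K : Submodule 𝕜 E) [CompleteSpace K] (A : E →L[𝕜] E)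
    (h1 : ∀ x ∈ K, A x ∈ K) (h2 : ∀ x ∈ K, ContinuousLinearMap.adjoint A x ∈ K) (v : E) :
    (K.orthogonalProjectionOnto (A v) : E) = A (K.orthogonalProjectionOnto v) := by
  have hz : A (v - K.orthogonalProjectionOnto v) ∈ Kᗮ := by
    rw [Submodule.mem_orthogonal]
    intro u hu
    rw [← ContinuousLinearMap.adjoint_inner_left]
    exact (Submodule.mem_orthogonal _ _).1 (Submodule.sub_starProjection_mem_orthogonal (K := K) v)
      _ (h2 u hu)
  exact Submodule.eq_starProjection_of_mem_orthogonal' (h1 _ (SetLike.coe_mem _)) hz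
    (by rw [← map_add, add_sub_cancel])

variable {H : Type*} [NormedAddCommGroup H] [InnerProductSpace ℂ H]

noncomputable abbrev psiE (H : Type*) [NormedAddCommGroup H] [InnerProductSpace ℂ H] :
    WithLp 2 (H × H) ≃L[ℂ] H × H := WithLp.prodContinuousLinearEquiv 2 ℂ H H

noncomputable def diagE (r : H →L[ℂ] H) : WithLp 2 (H × H) →L[ℂ] WithLp 2 (H × H) :=
  ((psiE H).symm : (H × H) →L[ℂ] WithLp 2 (H × H)) ∘L (r.prodMap r) ∘L
    ((psiE H) : WithLp 2 (H × H) →L[ℂ] (H × H))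

theorem psiE_diagE (r : H →L[ℂ] H) (v : WithLp 2 (H × H)) :
    psiE H (diagE r v) = (r (psiE H v).1, r (psiE H v).2) := rfl

theorem diagE_fst (r : H →L[ℂ] H) (v : WithLp 2 (H × H)) :
    (diagE r v).fst = r v.fst := rfl

theorem diagE_snd (r : H →L[ℂ] H) (v : WithLp 2 (H × H)) :
    (diagE r v).snd = r v.snd := rfl

theorem diagE_adjoint [CompleteSpace H] (r : H →L[ℂ] H) :
    ContinuousLinearMap.adjoint (diagE r) = diagE (ContinuousLinearMap.adjoint r) := by
  symm
  rw [ContinuousLinearMap.eq_adjoint_iff]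
  intro x y
  show inner ℂ (diagE _ x) y = inner ℂ x (diagE r y)
  rw [WithLp.prod_inner_apply, WithLp.prod_inner_apply]
  simp only [WithLp.ofLp_fst, WithLp.ofLp_snd]
  rw [diagE_fst, diagE_snd,
    diagE_fst, diagE_snd, ContinuousLinearMap.adjoint_inner_left,
    ContinuousLinearMap.adjoint_inner_left]

noncomputable def inlE (H : Type*) [NormedAddCommGroup H] [InnerProductSpace ℂ H] :
    H →L[ℂ] WithLp 2 (H × H) :=
  ((psiE H).symm : (H × H) →L[ℂ] WithLp 2 (H × H)) ∘L ContinuousLinearMap.inl ℂ H H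

noncomputable def inrE (H : Type*) [NormedAddCommGroup H] [InnerProductSpace ℂ H] :
    H →L[ℂ] WithLp 2 (H × H) :=
  ((psiE H).symm : (H × H) →L[ℂ] WithLp 2 (H × H)) ∘L ContinuousLinearMap.inr ℂ H H

theorem inlE_fst (a : H) : (inlE H a).fst = a := rfl
theorem inlE_snd (a : H) : (inlE H a).snd = 0 := rfl
theorem inrE_fst (a : H) : (inrE H a).fst = 0 := rfl
theorem inrE_snd (a : H) : (inrE H a).snd = a := rfl

theorem withLp_ext {v w : WithLp 2 (H × H)} (h1 : v.fst = w.fst) (h2 : v.snd = w.snd) :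
    v = w := by
  apply (psiE H).injective
  exact Prod.ext h1 h2

theorem decompE (v : WithLp 2 (H × H)) : v = inlE H v.fst + inrE H v.snd := by
  apply withLp_ext
  · rw [WithLp.add_fst, inlE_fst, inrE_fst, add_zero]
  · rw [WithLp.add_snd, inlE_snd, inrE_snd, zero_add]

theorem diagE_inlE (r : H →L[ℂ] H) (a : H) : diagE r (inlE H a) = inlE H (r a) := by
  apply withLp_ext
  · rw [diagE_fst, inlE_fst, inlE_fst]
  · rw [diagE_snd, inlE_snd, inlE_snd, map_zero]

theorem diagE_inrE (r : H →L[ℂ] H) (a : H) : diagE r (inrE H a) = inrE H (r a) := by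
  apply withLp_ext
  · rw [diagE_fst, inrE_fst, inrE_fst, map_zero]
  · rw [diagE_snd, inrE_snd, inrE_snd]

/-- the four matrix entries of an operator on `H ⊕ H` -/
noncomputable def entryE (T : WithLp 2 (H × H) →L[ℂ] WithLp 2 (H × H)) (i j : Bool) :
    H →L[ℂ] H :=
  ((if i then ContinuousLinearMap.fst ℂ H H else ContinuousLinearMap.snd ℂ H H) ∘L
      ((psiE H) : WithLp 2 (H × H) →L[ℂ] (H × H))) ∘L T ∘L (if j then inlE H else inrE H)

theorem entryE_tt (T : WithLp 2 (H × H) →L[ℂ] WithLp 2 (H × H)) (a : H) :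
    entryE T true true a = (T (inlE H a)).fst := rfl
theorem entryE_tf (T : WithLp 2 (H × H) →L[ℂ] WithLp 2 (H × H)) (a : H) :
    entryE T true false a = (T (inrE H a)).fst := rfl
theorem entryE_ft (T : WithLp 2 (H × H) →L[ℂ] WithLp 2 (H × H)) (a : H) :
    entryE T false true a = (T (inlE H a)).snd := rfl
theorem entryE_ff (T : WithLp 2 (H × H) →L[ℂ] WithLp 2 (H × H)) (a : H) :
    entryE T false false a = (T (inrE H a)).snd := rfl

theorem entryE_comm (T : WithLp 2 (H × H) →L[ℂ] WithLp 2 (H × H)) (r : H →L[ℂ] H)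
    (hTr : ∀ v, T (diagE r v) = diagE r (T v)) (i j : Bool) :
    r * entryE T i j = entryE T i j * r := by
  ext a
  show r (entryE T i j a) = entryE T i j (r a)
  cases i <;> cases j
  · rw [entryE_ff, entryE_ff, ← diagE_inrE, hTr, diagE_snd]
  · rw [entryE_ft, entryE_ft, ← diagE_inlE, hTr, diagE_snd]
  · rw [entryE_tf, entryE_tf, ← diagE_inrE, hTr, diagE_fst]
  · rw [entryE_tt, entryE_tt, ← diagE_inlE, hTr, diagE_fst]

theorem applyE_fst (T : WithLp 2 (H × H) →L[ℂ] WithLp 2 (H × H)) (v : WithLp 2 (H × H)) :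
    (T v).fst = entryE T true true v.fst + entryE T true false v.snd := by
  conv_lhs => rw [decompE v, map_add]
  rw [WithLp.add_fst, entryE_tt, entryE_tf]

theorem applyE_snd (T : WithLp 2 (H × H) →L[ℂ] WithLp 2 (H × H)) (v : WithLp 2 (H × H)) :
    (T v).snd = entryE T false true v.fst + entryE T false false v.snd := by
  conv_lhs => rw [decompE v, map_add]
  rw [WithLp.add_snd, entryE_ft, entryE_ff]

theorem diagE_comm_of_entries (T : WithLp 2 (H × H) →L[ℂ] WithLp 2 (H × H)) (s : H →L[ℂ] H)
    (hent : ∀ i j, entryE T i j * s = s * entryE T i j) (v : WithLp 2 (H × H)) :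
    T (diagE s v) = diagE s (T v) := by
  have hpt : ∀ i j a, entryE T i j (s a) = s (entryE T i j a) := fun i j a =>
    DFunLike.congr_fun (hent i j) a
  apply withLp_ext
  · rw [applyE_fst, diagE_fst, diagE_fst, diagE_snd, applyE_fst, hpt, hpt, map_add]
  · rw [applyE_snd, diagE_snd, diagE_fst, diagE_snd, applyE_snd, hpt, hpt, map_add]

end Aux

theorem stmt16 {H : Type*} [NormedAddCommGroup H] [InnerProductSpace ℂ H] [CompleteSpace H]
    (D : StarSubalgebra ℂ (H →L[ℂ] H)) (hclosed : IsClosed (D : Set (H →L[ℂ] H)))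
    (hnondeg : Dense ((Submodule.span ℂ
        {y : H | ∃ r ∈ D, ∃ ξ : H, y = r ξ} : Submodule ℂ H) : Set H))
    (V : H →ₗ.[ℂ] H) (hdense : Dense (V.domain : Set H)) (hclosable : V.IsClosable)
    (hdom : ∀ r ∈ D, ∀ x : V.domain, (r : H →L[ℂ] H) (x : H) ∈ V.domain)
    (hcomm : ∀ (r : H →L[ℂ] H) (hr : r ∈ D) (x : V.domain),
        V ⟨r (x : H), hdom r hr x⟩ = r (V x)) :
    ∀ r ∈ Set.centralizer (Set.centralizer (D : Set (H →L[ℂ] H))),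
      ∀ x : V.closure.domain, ∃ hx : r (x : H) ∈ V.closure.domain,
        V.closure ⟨r (x : H), hx⟩ = r (V.closure x) := by
  intro s hs x
  -- the closed graph of the closure, pulled back to the Hilbert space `WithLp 2 (H × H)`
  set K : Submodule ℂ (WithLp 2 (H × H)) :=
    V.closure.graph.comap (((psiE H : WithLp 2 (H × H) →L[ℂ] H × H)) : _ →ₗ[ℂ] _) with hK
  have hmemK : ∀ v : WithLp 2 (H × H), v ∈ K ↔ psiE H v ∈ V.closure.graph := fun v => Iff.rfl
  have hKclosed : IsClosed (K : Set (WithLp 2 (H × H))) := by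
    have : (K : Set (WithLp 2 (H × H))) = (psiE H) ⁻¹' (V.closure.graph : Set (H × H)) := rfl
    rw [this]
    exact (hclosable.closure_isClosed).preimage (psiE H).continuous
  haveI : CompleteSpace K := hKclosed.completeSpace_coe
  -- the graph is invariant under `diagE r` for `r ∈ D`
  have hinv : ∀ r ∈ D, ∀ v ∈ K, diagE r v ∈ K := by
    intro r hr v hv
    rw [hmemK] at hv ⊢
    rw [psiE_diagE]
    rw [← hclosable.graph_closure_eq_closure_graph, ← SetLike.mem_coe,
      Submodule.topologicalClosure_coe] at hv ⊢
    have hcont : Continuous fun p : H × H => ((r p.1, r p.2) : H × H) :=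
      (r.continuous.comp continuous_fst).prodMk (r.continuous.comp continuous_snd)
    have hmaps : Set.MapsTo (fun p : H × H => ((r p.1, r p.2) : H × H))
        (V.graph : Set (H × H)) (V.graph : Set (H × H)) := by
      intro q hq
      rw [SetLike.mem_coe, V.mem_graph_iff] at hq
      obtain ⟨ξ, hq1, hq2⟩ := hq
      show ((r q.1, r q.2) : H × H) ∈ (V.graph : Set (H × H))
      rw [SetLike.mem_coe, ← hq1, ← hq2, ← hcomm r hr ξ]
      exact V.mem_graph ⟨r ↑ξ, hdom r hr ξ⟩
    exact map_mem_closure (f := fun p : H × H => ((r p.1, r p.2) : H × H)) hcont hv hmaps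
  -- the (coerced) orthogonal projection onto the graph
  set Pc : WithLp 2 (H × H) →L[ℂ] WithLp 2 (H × H) :=
    K.subtypeL.comp (K.orthogonalProjectionOnto) with hPc
  have hPcK : ∀ v, Pc v ∈ K := fun v => SetLike.coe_mem _
  have hPceq : ∀ v ∈ K, Pc v = v := fun v hv => Submodule.starProjection_eq_self_iff.mpr hv
  -- the projection commutes with `diagE r` for `r ∈ D`
  have hPcomm : ∀ r ∈ D, ∀ v, Pc (diagE r v) = diagE r (Pc v) := by
    intro r hr v
    refine projComm' K (diagE r) (hinv r hr) ?_ v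
    intro w hw
    rw [diagE_adjoint, ← ContinuousLinearMap.star_eq_adjoint]
    exact hinv (star r) (star_mem hr) w hw
  -- hence the matrix entries of `Pc` lie in the commutant `D'`
  have hent : ∀ i j, entryE Pc i j ∈ Set.centralizer (D : Set (H →L[ℂ] H)) := by
    intro i j r hr
    exact entryE_comm Pc r (hPcomm r hr) i j
  -- hence `Pc` commutes with `diagE s` for `s ∈ D''`
  have hPs : ∀ v, Pc (diagE s v) = diagE s (Pc v) :=
    diagE_comm_of_entries Pc s (fun i j => hs _ (hent i j))
  -- conclude
  set v : WithLp 2 (H × H) := (psiE H).symm (↑x, V.closure x) with hv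
  have hvK : v ∈ K := by
    rw [hmemK, hv, ContinuousLinearEquiv.apply_symm_apply]
    exact V.closure.mem_graph x
  have hsvK : diagE s v ∈ K := by
    rw [← hPceq v hvK, ← hPs]
    exact hPcK _
  rw [hmemK, psiE_diagE, hv, ContinuousLinearEquiv.apply_symm_apply] at hsvK
  rw [V.closure.mem_graph_iff] at hsvK
  obtain ⟨y, hy1, hy2⟩ := hsvK
  have hy1' : (y : H) = s ↑x := hy1
  have hy2' : V.closure y = s (V.closure x) := hy2
  refine ⟨hy1' ▸ y.2, ?_⟩
  rw [show (⟨s ↑x, hy1' ▸ y.2⟩ : V.closure.domain) = y from Subtype.ext hy1'.symm, hy2']
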